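/- Let G be a graph of order n and let x and y be nonadjacent vertices with d(x) + d(y) ≥ n + k − 1. Then G is k-factor-critical if and only if G + xy is k-factor-critical. -/

import Mathlib

open SimpleGraph

variable {V : Type*}

/-- `G` has a perfect matching covering exactly the vertex set `A`
(i.e. the graph obtained from `G` by deleting the vertices outside `A` has a perfect matching). -/
def HasPMOn (G : SimpleGraph V) (A : Set V) : Prop :=
  ∃ M : G.Subgraph, M.verts = A ∧ M.IsMatching

/-- `G` is `k`-factor-critical: deleting any `k` vertices leaves a graph with a perfect matching. -/
def FactorCritical [Fintype V] (G : SimpleGraph V) (k : ℕ) : Prop :=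
  ∀ S : Finset V, S.card = k → HasPMOn G ((↑S : Set V)ᶜ)

/-- `G` is minimally `k`-factor-critical. -/
def MinFactorCritical [Fintype V] (G : SimpleGraph V) (k : ℕ) : Prop :=
  FactorCritical G k ∧ ∀ u v : V, G.Adj u v → ¬ FactorCritical (G.deleteEdges {s(u,v)}) k

/-- The number of odd connected components of a graph. -/
noncomputable def oddComponents {W : Type*} (G : SimpleGraph W) : ℕ :=
  Nat.card {c : G.ConnectedComponent // Odd (Nat.card c.supp)}

theorem factorCritical_addEdge [Fintype V] (G : SimpleGraph V) [DecidableRel G.Adj]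
    (k : ℕ) (x y : V) (hne : x ≠ y) (hxy : ¬ G.Adj x y)
    (hdeg : G.degree x + G.degree y ≥ Fintype.card V + k - 1) :
    FactorCritical G k ↔ FactorCritical (G ⊔ SimpleGraph.fromEdgeSet {s(x, y)}) k := by
  classical
  constructor
  · intro h S hS
    obtain ⟨M, hMv, hMm⟩ := h S hS
    refine ⟨M.map (Hom.ofLE le_sup_left), ?_, hMm.map_ofLE le_sup_left⟩
    simp [Subgraph.map, hMv]
  · intro h S hS
    obtain ⟨M, hMv, hMm⟩ := h S hS
    by_cases hadj : M.Adj x y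
    · -- the matching uses the new edge xy
      have hxS : x ∉ S := by
        have := M.edge_vert hadj
        rw [hMv] at this; simpa using this
      have hyS : y ∉ S := by
        have := M.edge_vert hadj.symm
        rw [hMv] at this; simpa using this
      have hvmem : ∀ w : V, w ∈ M.verts ↔ w ∉ S := by
        intro w; rw [hMv]; simp
      have huniq : ∀ {a b c : V}, M.Adj a b → M.Adj a c → b = c := by
        intro a b c hab hac
        exact (hMm (M.edge_vert hab)).unique hab hac
      -- partner function
      have hex : ∀ w : V, ∃ w', w ∈ M.verts → M.Adj w w' := by
        intro w
        by_cases hw : w ∈ M.verts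
        · obtain ⟨w', hw'⟩ := (hMm hw).exists
          exact ⟨w', fun _ => hw'⟩
        · exact ⟨w, fun h' => absurd h' hw⟩
      choose p hp using hex
      -- the set A of vertices outside S ∪ {x, y}
      set A : Finset V := Finset.univ.filter (fun w => w ∉ S ∧ w ≠ x ∧ w ≠ y) with hA
      have hmemA : ∀ w : V, w ∈ A ↔ (w ∉ S ∧ w ≠ x ∧ w ≠ y) := by
        intro w; simp [hA]
      have hAM : ∀ w ∈ A, w ∈ M.verts := by
        intro w hw
        rw [hvmem]; exact ((hmemA w).1 hw).1
      have hpA : ∀ w ∈ A, p w ∈ A := by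
        intro w hw
        obtain ⟨hwS, hwx, hwy⟩ := (hmemA w).1 hw
        have hadjw : M.Adj w (p w) := hp w (hAM w hw)
        have h1 : p w ∉ S := by rw [← hvmem]; exact M.edge_vert hadjw.symm
        have h2 : p w ≠ x := by
          intro hpx
          rw [hpx] at hadjw
          exact hwy (huniq hadj hadjw.symm).symm
        have h3 : p w ≠ y := by
          intro hpy
          rw [hpy] at hadjw
          exact hwx (huniq hadj.symm hadjw.symm).symm
        exact (hmemA _).2 ⟨h1, h2, h3⟩
      have hpp : ∀ w ∈ A, p (p w) = w := by
        intro w hw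
        have h1 : M.Adj (p w) (p (p w)) := hp _ (hAM _ (hpA w hw))
        have h2 : M.Adj (p w) w := (hp w (hAM w hw)).symm
        exact huniq h1 h2
      by_cases hgood : ∃ u v : V, u ∈ A ∧ v ∈ A ∧ M.Adj u v ∧ G.Adj x u ∧ G.Adj y v
      · obtain ⟨u, v, huA, hvA, huv, hxu, hyv⟩ := hgood
        obtain ⟨huS, hux, huy⟩ := (hmemA u).1 huA
        obtain ⟨hvS, hvx, hvy⟩ := (hmemA v).1 hvA
        have huvne : u ≠ v := huv.ne
        -- build the swapped matching
        refine ⟨⟨(↑S : Set V)ᶜ,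
          fun a b => (M.Adj a b ∧ a ≠ x ∧ a ≠ y ∧ a ≠ u ∧ a ≠ v ∧ b ≠ x ∧ b ≠ y ∧ b ≠ u ∧ b ≠ v)
            ∨ (a = x ∧ b = u) ∨ (a = u ∧ b = x) ∨ (a = y ∧ b = v) ∨ (a = v ∧ b = y),
          ?_, ?_, ?_⟩, rfl, ?_⟩
        · -- adj_sub
          rintro a b (⟨hab, hax, hay, -, -, -, -, -, -⟩ | ⟨rfl, rfl⟩ | ⟨rfl, rfl⟩ | ⟨rfl, rfl⟩ |
            ⟨rfl, rfl⟩)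
          · rcases M.adj_sub hab with h | h
            · exact h
            · exfalso
              rw [fromEdgeSet_adj] at h
              simp only [Set.mem_singleton_iff, Sym2.eq, Sym2.rel_iff', Prod.mk.injEq,
                Prod.swap_prod_mk] at h
              rcases h.1 with ⟨rfl, rfl⟩ | ⟨rfl, rfl⟩
              · exact hax rfl
              · exact hay rfl
          · exact hxu
          · exact hxu.symm
          · exact hyv
          · exact hyv.symm
        · -- edge_vert
          rintro a b (⟨hab, -⟩ | ⟨rfl, -⟩ | ⟨rfl, -⟩ | ⟨rfl, -⟩ | ⟨rfl, -⟩) <;>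
            simp only [Set.mem_compl_iff, Finset.mem_coe]
          · rw [← hvmem]; exact M.edge_vert hab
          · exact hxS
          · exact huS
          · exact hyS
          · exact hvS
        · -- symm
          constructor
          rintro a b (⟨hab, h1, h2, h3, h4, h5, h6, h7, h8⟩ | ⟨rfl, rfl⟩ | ⟨rfl, rfl⟩ |
            ⟨rfl, rfl⟩ | ⟨rfl, rfl⟩)
          · exact Or.inl ⟨hab.symm, h5, h6, h7, h8, h1, h2, h3, h4⟩
          · exact Or.inr (Or.inr (Or.inl ⟨rfl, rfl⟩))
          · exact Or.inr (Or.inl ⟨rfl, rfl⟩)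
          · exact Or.inr (Or.inr (Or.inr (Or.inr ⟨rfl, rfl⟩)))
          · exact Or.inr (Or.inr (Or.inr (Or.inl ⟨rfl, rfl⟩)))
        · -- IsMatching
          intro a ha
          have haS : a ∉ S := by simpa using ha
          by_cases hax : a = x
          · subst hax
            refine ⟨u, Or.inr (Or.inl ⟨rfl, rfl⟩), ?_⟩
            rintro b (⟨-, h1, -⟩ | ⟨-, rfl⟩ | ⟨h1, -⟩ | ⟨h1, -⟩ | ⟨h1, -⟩)
            · exact absurd rfl h1
            · rfl
            · exact absurd h1.symm hux
            · exact absurd h1 hne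
            · exact absurd h1.symm hvx
          by_cases hau : a = u
          · subst hau
            refine ⟨x, Or.inr (Or.inr (Or.inl ⟨rfl, rfl⟩)), ?_⟩
            rintro b (⟨-, -, -, h1, -⟩ | ⟨h1, -⟩ | ⟨-, rfl⟩ | ⟨h1, -⟩ | ⟨h1, -⟩)
            · exact absurd rfl h1
            · exact absurd h1 hux
            · rfl
            · exact absurd h1 huy
            · exact absurd h1 huvne
          by_cases hay : a = y
          · subst hay
            refine ⟨v, Or.inr (Or.inr (Or.inr (Or.inl ⟨rfl, rfl⟩))), ?_⟩
            rintro b (⟨-, -, h1, -⟩ | ⟨h1, -⟩ | ⟨h1, -⟩ | ⟨-, rfl⟩ | ⟨h1, -⟩)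
            · exact absurd rfl h1
            · exact absurd h1.symm hne
            · exact absurd h1.symm huy
            · rfl
            · exact absurd h1.symm hvy
          by_cases hav : a = v
          · subst hav
            refine ⟨y, Or.inr (Or.inr (Or.inr (Or.inr ⟨rfl, rfl⟩))), ?_⟩
            rintro b (⟨-, -, -, -, h1, -⟩ | ⟨h1, -⟩ | ⟨h1, -⟩ | ⟨h1, -⟩ | ⟨-, rfl⟩)
            · exact absurd rfl h1
            · exact absurd h1 hvx
            · exact absurd h1.symm huvne
            · exact absurd h1 hvy
            · rfl
          · -- generic vertex
            have haA : a ∈ A := (hmemA a).2 ⟨haS, hax, hay⟩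
            have haM : a ∈ M.verts := hAM a haA
            have hadja : M.Adj a (p a) := hp a haM
            have h1 : p a ≠ x := by
              intro h; rw [h] at hadja
              exact hay (huniq hadj hadja.symm).symm
            have h2 : p a ≠ y := by
              intro h; rw [h] at hadja
              exact hax (huniq hadj.symm hadja.symm).symm
            have h3 : p a ≠ u := by
              intro h; rw [h] at hadja
              exact hav (huniq huv hadja.symm).symm
            have h4 : p a ≠ v := by
              intro h; rw [h] at hadja
              exact hau (huniq huv.symm hadja.symm).symm
            refine ⟨p a, Or.inl ⟨hadja, hax, hay, hau, hav, h1, h2, h3, h4⟩, ?_⟩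
            rintro b (⟨hab, -⟩ | ⟨hh, -⟩ | ⟨hh, -⟩ | ⟨hh, -⟩ | ⟨hh, -⟩)
            · exact huniq hab hadja
            · exact absurd hh hax
            · exact absurd hh hau
            · exact absurd hh hay
            · exact absurd hh hav
      · -- counting: no good pair contradicts the degree condition
        exfalso
        set F1 : Finset V := A.filter (fun w => G.Adj x w) with hF1
        set F2 : Finset V := A.filter (fun w => G.Adj y (p w)) with hF2
        set F3 : Finset V := A.filter (fun w => G.Adj y w) with hF3
        have hdisj : Disjoint F1 F2 := by
          rw [Finset.disjoint_left]
          intro w hw1 hw2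
          rw [hF1, Finset.mem_filter] at hw1
          rw [hF2, Finset.mem_filter] at hw2
          exact hgood ⟨w, p w, hw1.1, hpA w hw1.1, hp w (hAM w hw1.1), hw1.2, hw2.2⟩
        have hc12 : F1.card + F2.card ≤ A.card := by
          rw [← Finset.card_union_of_disjoint hdisj]
          apply Finset.card_le_card
          rw [Finset.union_subset_iff]
          exact ⟨Finset.filter_subset _ _, Finset.filter_subset _ _⟩
        have hc23 : F3.card = F2.card := by
          refine Finset.card_bij' (fun w _ => p w) (fun w _ => p w) ?_ ?_ ?_ ?_
          · intro w hw
            rw [hF3, Finset.mem_filter] at hw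
            rw [hF2, Finset.mem_filter, hpp w hw.1]
            exact ⟨hpA w hw.1, hw.2⟩
          · intro w hw
            rw [hF2, Finset.mem_filter] at hw
            rw [hF3, Finset.mem_filter]
            exact ⟨hpA w hw.1, hw.2⟩
          · intro w hw
            rw [hF3, Finset.mem_filter] at hw
            exact hpp w hw.1
          · intro w hw
            rw [hF2, Finset.mem_filter] at hw
            exact hpp w hw.1
        have hdx : G.degree x ≤ F1.card + k := by
          rw [← hS, ← G.card_neighborFinset_eq_degree]
          calc (G.neighborFinset x).card ≤ (F1 ∪ S).card := by
                apply Finset.card_le_card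
                intro w hw
                rw [mem_neighborFinset] at hw
                by_cases hwS : w ∈ S
                · exact Finset.mem_union_right _ hwS
                · refine Finset.mem_union_left _ ?_
                  have hwA : w ∈ A := by
                    rw [hmemA]
                    exact ⟨hwS, hw.ne', fun h => hxy (h ▸ hw)⟩
                  rw [hF1, Finset.mem_filter]
                  exact ⟨hwA, hw⟩
            _ ≤ F1.card + S.card := Finset.card_union_le _ _
        have hdy : G.degree y ≤ F3.card + k := by
          rw [← hS, ← G.card_neighborFinset_eq_degree]
          calc (G.neighborFinset y).card ≤ (F3 ∪ S).card := by
                apply Finset.card_le_card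
                intro w hw
                rw [mem_neighborFinset] at hw
                by_cases hwS : w ∈ S
                · exact Finset.mem_union_right _ hwS
                · refine Finset.mem_union_left _ ?_
                  have hwA : w ∈ A := by
                    rw [hmemA]
                    exact ⟨hwS, fun h => hxy (h ▸ hw).symm, hw.ne'⟩
                  rw [hF3, Finset.mem_filter]
                  exact ⟨hwA, hw⟩
            _ ≤ F3.card + S.card := Finset.card_union_le _ _
        have hAeq : A = Finset.univ \ (insert x (insert y S)) := by
          ext w
          simp only [hmemA, Finset.mem_sdiff, Finset.mem_univ, Finset.mem_insert, true_and]
          tauto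
        have hins : (insert x (insert y S)).card = k + 2 := by
          rw [Finset.card_insert_of_notMem (by simp [hne, hxS]),
            Finset.card_insert_of_notMem hyS, hS]
        have hsub : (insert x (insert y S)).card ≤ Fintype.card V := Finset.card_le_univ _
        have hAcard : A.card = Fintype.card V - (k + 2) := by
          rw [hAeq, Finset.card_sdiff_of_subset (Finset.subset_univ _), Finset.card_univ, hins]
        rw [hins] at hsub
        omega
    · -- the matching avoids xy : transfer it to G
      refine ⟨⟨M.verts, M.Adj, ?_, M.edge_vert, M.symm⟩, hMv, hMm⟩
      intro a b hab
      rcases M.adj_sub hab with h | h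
      · exact h
      · exfalso
        rw [fromEdgeSet_adj] at h
        simp only [Set.mem_singleton_iff, Sym2.eq, Sym2.rel_iff', Prod.mk.injEq,
          Prod.swap_prod_mk] at h
        rcases h.1 with ⟨rfl, rfl⟩ | ⟨rfl, rfl⟩
        · exact hadj hab
        · exact hadj hab.symm
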